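/- Let $\{L_1,\dots,L_n, M_1,\dots,M_m\}$ be $n+m$ lines in general position over $\mathbb{F}_q$ (pairwise intersecting, no three concurrent) defined by linear forms $l_i, m_j$, and let $P_{ij} = L_i \cap M_j$. Suppose $\max\{f(k)\}$ is attained at $k = k_0$. Then the polynomial $p = \prod_{i=1}^{k_0-1} l_i \cdot \prod_{j=1}^{d+1-k_0} m_j$ has degree $d$, and its codeword $e(p) = (p(P_{ij}))_{i,j}$ has weight exactly $nm - \max\{f(k) : 1 \le k \le d+1\}$; i.e., the minimum distance bound is attained. -/

import Mathlib

open MvPolynomial Finset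

section Aux

lemma coeff_zero_of_lt' {σ R : Type*} [CommRing R] {p : MvPolynomial σ R} {x : σ →₀ ℕ}
    (h : p.totalDegree < x.degree) : MvPolynomial.coeff x p = 0 :=
  coeff_eq_zero_of_totalDegree_lt h

lemma topComponent_mul {σ R : Type*} [CommRing R] (p q : MvPolynomial σ R) {A B : ℕ}
    (hp : p.totalDegree ≤ A) (hq : q.totalDegree ≤ B) :
    homogeneousComponent (A + B) (p * q) =
      homogeneousComponent A p * homogeneousComponent B q := by
  classical
  ext μ
  rw [coeff_homogeneousComponent]
  by_cases hμ : μ.degree = A + B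
  · rw [if_pos hμ, coeff_mul, coeff_mul]
    refine Finset.sum_congr rfl ?_
    intro xy hxy
    obtain ⟨x, y⟩ := xy
    rw [Finset.HasAntidiagonal.mem_antidiagonal] at hxy
    simp only
    rw [coeff_homogeneousComponent, coeff_homogeneousComponent]
    have hdeg : x.degree + y.degree = A + B := by
      rw [← hμ, ← hxy]
      simp [Finsupp.degree_eq_weight_one, map_add]
    by_cases hx : x.degree = A
    · rw [if_pos hx, if_pos (by omega)]
    · rw [if_neg hx]
      by_cases hxA : x.degree ≤ A
      · have hy : B < y.degree := by omega
        rw [if_neg (by omega)]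
        have h0 : MvPolynomial.coeff y q = 0 :=
          coeff_zero_of_lt' (lt_of_le_of_lt hq hy)
        simp [h0]
      · have h0 : MvPolynomial.coeff x p = 0 :=
          coeff_zero_of_lt' (lt_of_le_of_lt hp (by omega))
        simp [h0]
  · rw [if_neg hμ]
    exact (((homogeneousComponent_isHomogeneous A p).mul
      (homogeneousComponent_isHomogeneous B q)).coeff_eq_zero hμ).symm

lemma topComponent_prod {σ R ι : Type*} [CommRing R] (s : Finset ι)
    (f : ι → MvPolynomial σ R) (dg : ι → ℕ) (h : ∀ i ∈ s, (f i).totalDegree ≤ dg i) :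
    homogeneousComponent (∑ i ∈ s, dg i) (∏ i ∈ s, f i) =
      ∏ i ∈ s, homogeneousComponent (dg i) (f i) := by
  classical
  induction s using Finset.cons_induction with
  | empty => simp [homogeneousComponent_zero]
  | cons a s ha ih =>
    rw [Finset.prod_cons, Finset.prod_cons, Finset.sum_cons,
      topComponent_mul _ _ (h a (Finset.mem_cons_self a s))
        ((totalDegree_finset_prod s f).trans
          (Finset.sum_le_sum (fun i hi => h i (Finset.mem_cons_of_mem hi)))),
      ih (fun i hi => h i (Finset.mem_cons_of_mem hi))]

lemma card_fin_lt (n t : ℕ) (ht : t ≤ n) :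
    (Finset.univ.filter (fun i : Fin n => (i : ℕ) < t)).card = t := by
  rw [show Finset.univ.filter (fun i : Fin n => (i : ℕ) < t) =
      (Finset.range t).attachFin (fun m hm => lt_of_lt_of_le (Finset.mem_range.mp hm) ht) by
    ext i; simp [Finset.mem_attachFin], Finset.card_attachFin, Finset.card_range]

variable {F : Type*} [Field F]

lemma totalDegree_lin_le (a b c : F) :
    (C a * X 0 + C b * X 1 + C c : MvPolynomial (Fin 2) F).totalDegree ≤ 1 := by
  refine (totalDegree_add _ _).trans (max_le ((totalDegree_add _ _).trans (max_le ?_ ?_)) ?_)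
  · exact (totalDegree_mul _ _).trans (by simp [totalDegree_C, totalDegree_X])
  · exact (totalDegree_mul _ _).trans (by simp [totalDegree_C, totalDegree_X])
  · simp [totalDegree_C]

lemma topComponent_lin (a b c : F) :
    homogeneousComponent 1 (C a * X 0 + C b * X 1 + C c : MvPolynomial (Fin 2) F) =
      C a * X 0 + C b * X 1 := by
  have h1 : (C a * X 0 + C b * X 1 : MvPolynomial (Fin 2) F) ∈
      homogeneousSubmodule (Fin 2) F 1 := by
    rw [mem_homogeneousSubmodule]
    exact ((isHomogeneous_X F 0).C_mul a).add ((isHomogeneous_X F 1).C_mul b)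
  rw [map_add, homogeneousComponent_of_mem h1, if_pos rfl,
    homogeneousComponent_eq_zero (n := 1) (φ := (C c : MvPolynomial (Fin 2) F))
      (by simp [totalDegree_C]), add_zero]

lemma lin_ne_zero {a b : F} (hab : (a, b) ≠ (0, 0)) :
    (C a * X 0 + C b * X 1 : MvPolynomial (Fin 2) F) ≠ 0 := by
  intro h
  apply hab
  have h0 := congrArg (MvPolynomial.coeff (Finsupp.single (0 : Fin 2) 1)) h
  have h1 := congrArg (MvPolynomial.coeff (Finsupp.single (1 : Fin 2) 1)) h
  simp [coeff_add, coeff_C_mul, coeff_X', Finsupp.single_eq_single_iff] at h0 h1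
  simp [Prod.ext_iff, h0, h1]

end Aux

/-- The quadratic `f(x) = x² + (m-n-d-2)x + (n+1)(d+1) - m`. -/
def fQ (n m d : ℕ) (x : ℤ) : ℤ :=
  x ^ 2 + ((m : ℤ) - n - d - 2) * x + ((n : ℤ) + 1) * ((d : ℤ) + 1) - m

/-- `max { f(k) : 1 ≤ k ≤ d+1 }`. -/
def maxF (n m d : ℕ) : ℤ :=
  (Finset.Icc 1 (d + 1)).sup' (Finset.nonempty_Icc.mpr (by omega))
    (fun k : ℕ => fQ n m d (k : ℤ))

/-- For the configuration of `n + m` lines `L_i` (forms `l_i`, with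
coefficients `a b c`) and `M_j` (forms `m_j`, coefficients `a' b' c'`) in general
position (pairwise meeting in exactly one point, no three concurrent), with
`P i j = L_i ∩ M_j`, and `k₀ ∈ {1,…,d+1}` attaining `max f(k)`, the polynomial
`p = ∏_{i=1}^{k₀-1} l_i · ∏_{j=1}^{d+1-k₀} m_j` has total degree `d` and its
codeword `e(p)` has weight exactly `nm - max{f(k) : 1 ≤ k ≤ d+1}`. -/
theorem stmt_18 {F : Type*} [Field F] [DecidableEq F] (n m d : ℕ)
    (hdn : d < n) (hdm : d < m)
    (a b c : Fin n → F) (a' b' c' : Fin m → F)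
    (hab : ∀ i, (a i, b i) ≠ (0, 0)) (hab' : ∀ j, (a' j, b' j) ≠ (0, 0))
    (hpair : ∀ i j : Fin n ⊕ Fin m, i ≠ j →
      ∃! p : F × F,
        Sum.elim a a' i * p.1 + Sum.elim b b' i * p.2 + Sum.elim c c' i = 0 ∧
        Sum.elim a a' j * p.1 + Sum.elim b b' j * p.2 + Sum.elim c c' j = 0)
    (hgen : ∀ i j k : Fin n ⊕ Fin m, i ≠ j → i ≠ k → j ≠ k →
      ¬∃ p : F × F,
        Sum.elim a a' i * p.1 + Sum.elim b b' i * p.2 + Sum.elim c c' i = 0 ∧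
        Sum.elim a a' j * p.1 + Sum.elim b b' j * p.2 + Sum.elim c c' j = 0 ∧
        Sum.elim a a' k * p.1 + Sum.elim b b' k * p.2 + Sum.elim c c' k = 0)
    (P : Fin n → Fin m → F × F)
    (hP : ∀ i j, a i * (P i j).1 + b i * (P i j).2 + c i = 0 ∧
      a' j * (P i j).1 + b' j * (P i j).2 + c' j = 0)
    (k₀ : ℕ) (hk₀ : 1 ≤ k₀ ∧ k₀ ≤ d + 1) (hmax : fQ n m d (k₀ : ℤ) = maxF n m d) :
    (((∏ i : Fin n, if (i : ℕ) + 1 < k₀ then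
          (MvPolynomial.C (a i) * MvPolynomial.X 0 + MvPolynomial.C (b i) *
            MvPolynomial.X 1 + MvPolynomial.C (c i)) else 1) *
        (∏ j : Fin m, if (j : ℕ) < d + 1 - k₀ then
          (MvPolynomial.C (a' j) * MvPolynomial.X 0 + MvPolynomial.C (b' j) *
            MvPolynomial.X 1 + MvPolynomial.C (c' j)) else 1) :
        MvPolynomial (Fin 2) F).totalDegree = d) ∧
    (((Finset.univ.filter (fun q : Fin n × Fin m =>
        MvPolynomial.eval ![(P q.1 q.2).1, (P q.1 q.2).2]
          ((∏ i : Fin n, if (i : ℕ) + 1 < k₀ then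
              (MvPolynomial.C (a i) * MvPolynomial.X 0 + MvPolynomial.C (b i) *
                MvPolynomial.X 1 + MvPolynomial.C (c i)) else 1) *
            (∏ j : Fin m, if (j : ℕ) < d + 1 - k₀ then
              (MvPolynomial.C (a' j) * MvPolynomial.X 0 + MvPolynomial.C (b' j) *
                MvPolynomial.X 1 + MvPolynomial.C (c' j)) else 1)) ≠ 0)).card : ℤ) =
      (n * m : ℤ) - maxF n m d) := by
  obtain ⟨hk1, hk2⟩ := hk₀
  set A : MvPolynomial (Fin 2) F := ∏ i : Fin n, if (i : ℕ) + 1 < k₀ then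
      (C (a i) * X 0 + C (b i) * X 1 + C (c i)) else 1 with hA
  set B : MvPolynomial (Fin 2) F := ∏ j : Fin m, if (j : ℕ) < d + 1 - k₀ then
      (C (a' j) * X 0 + C (b' j) * X 1 + C (c' j)) else 1 with hB
  have hc1 : (univ.filter (fun i : Fin n => (i : ℕ) + 1 < k₀)).card = k₀ - 1 := by
    rw [Finset.filter_congr (q := fun i : Fin n => (i : ℕ) < k₀ - 1) (fun i _ => by omega)]
    exact card_fin_lt n (k₀ - 1) (by omega)
  have hc2 : (univ.filter (fun j : Fin m => (j : ℕ) < d + 1 - k₀)).card = d + 1 - k₀ :=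
    card_fin_lt m (d + 1 - k₀) (by omega)
  have hs1 : (∑ i : Fin n, if (i : ℕ) + 1 < k₀ then 1 else 0) = k₀ - 1 := by
    rw [Finset.sum_ite, Finset.sum_const, Finset.sum_const_zero, add_zero, smul_eq_mul,
      mul_one, hc1]
  have hs2 : (∑ j : Fin m, if (j : ℕ) < d + 1 - k₀ then 1 else 0) = d + 1 - k₀ := by
    rw [Finset.sum_ite, Finset.sum_const, Finset.sum_const_zero, add_zero, smul_eq_mul,
      mul_one, hc2]
  have hbd1 : ∀ i ∈ (univ : Finset (Fin n)),
      (if (i : ℕ) + 1 < k₀ then (C (a i) * X 0 + C (b i) * X 1 + C (c i) :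
        MvPolynomial (Fin 2) F) else 1).totalDegree ≤
        (if (i : ℕ) + 1 < k₀ then 1 else 0) := by
    intro i _
    by_cases h : (i : ℕ) + 1 < k₀
    · simp only [if_pos h]; exact totalDegree_lin_le _ _ _
    · simp [if_neg h]
  have hbd2 : ∀ j ∈ (univ : Finset (Fin m)),
      (if (j : ℕ) < d + 1 - k₀ then (C (a' j) * X 0 + C (b' j) * X 1 + C (c' j) :
        MvPolynomial (Fin 2) F) else 1).totalDegree ≤
        (if (j : ℕ) < d + 1 - k₀ then 1 else 0) := by
    intro j _
    by_cases h : (j : ℕ) < d + 1 - k₀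
    · simp only [if_pos h]; exact totalDegree_lin_le _ _ _
    · simp [if_neg h]
  have hdegA : A.totalDegree ≤ k₀ - 1 := by
    rw [hA]
    exact ((totalDegree_finset_prod _ _).trans (Finset.sum_le_sum hbd1)).trans hs1.le
  have hdegB : B.totalDegree ≤ d + 1 - k₀ := by
    rw [hB]
    exact ((totalDegree_finset_prod _ _).trans (Finset.sum_le_sum hbd2)).trans hs2.le
  have hup : (A * B).totalDegree ≤ d := (totalDegree_mul A B).trans (by omega)
  have htopA : homogeneousComponent (k₀ - 1) A =
      ∏ i : Fin n, (if (i : ℕ) + 1 < k₀ then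
        (C (a i) * X 0 + C (b i) * X 1 : MvPolynomial (Fin 2) F) else 1) := by
    have h := topComponent_prod univ (fun i : Fin n => if (i : ℕ) + 1 < k₀ then
        (C (a i) * X 0 + C (b i) * X 1 + C (c i) : MvPolynomial (Fin 2) F) else 1)
      (fun i : Fin n => if (i : ℕ) + 1 < k₀ then 1 else 0) hbd1
    rw [hs1] at h
    rw [hA, h]
    refine Finset.prod_congr rfl fun i _ => ?_
    by_cases h : (i : ℕ) + 1 < k₀
    · simp only [if_pos h]; exact topComponent_lin _ _ _
    · simp only [if_neg h]; rw [homogeneousComponent_zero]; simp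
  have htopB : homogeneousComponent (d + 1 - k₀) B =
      ∏ j : Fin m, (if (j : ℕ) < d + 1 - k₀ then
        (C (a' j) * X 0 + C (b' j) * X 1 : MvPolynomial (Fin 2) F) else 1) := by
    have h := topComponent_prod univ (fun j : Fin m => if (j : ℕ) < d + 1 - k₀ then
        (C (a' j) * X 0 + C (b' j) * X 1 + C (c' j) : MvPolynomial (Fin 2) F) else 1)
      (fun j : Fin m => if (j : ℕ) < d + 1 - k₀ then 1 else 0) hbd2
    rw [hs2] at h
    rw [hB, h]
    refine Finset.prod_congr rfl fun j _ => ?_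
    by_cases h : (j : ℕ) < d + 1 - k₀
    · simp only [if_pos h]; exact topComponent_lin _ _ _
    · simp only [if_neg h]; rw [homogeneousComponent_zero]; simp
  have htopAB : homogeneousComponent d (A * B) ≠ 0 := by
    rw [show d = (k₀ - 1) + (d + 1 - k₀) by omega,
      topComponent_mul A B hdegA hdegB, htopA, htopB]
    refine mul_ne_zero (Finset.prod_ne_zero_iff.mpr fun i _ => ?_)
      (Finset.prod_ne_zero_iff.mpr fun j _ => ?_)
    · by_cases h : (i : ℕ) + 1 < k₀
      · simpa only [if_pos h] using lin_ne_zero (hab i)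
      · simp [if_neg h]
    · by_cases h : (j : ℕ) < d + 1 - k₀
      · simpa only [if_pos h] using lin_ne_zero (hab' j)
      · simp [if_neg h]
  have hlow : d ≤ (A * B).totalDegree := by
    by_contra hcon
    push_neg at hcon
    exact htopAB (homogeneousComponent_eq_zero (h := hcon))
  refine ⟨le_antisymm hup hlow, ?_⟩
  have hev : ∀ (i : Fin n) (j : Fin m),
      (eval ![(P i j).1, (P i j).2] (A * B) ≠ 0) ↔
        (k₀ ≤ (i : ℕ) + 1 ∧ d + 1 - k₀ ≤ (j : ℕ)) := by
    intro i j
    have hevL : ∀ i' : Fin n, eval ![(P i j).1, (P i j).2]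
        (if (i' : ℕ) + 1 < k₀ then (C (a i') * X 0 + C (b i') * X 1 + C (c i') :
          MvPolynomial (Fin 2) F) else 1) =
        if (i' : ℕ) + 1 < k₀ then (a i' * (P i j).1 + b i' * (P i j).2 + c i') else 1 := by
      intro i'; split <;> simp
    have hevM : ∀ j' : Fin m, eval ![(P i j).1, (P i j).2]
        (if (j' : ℕ) < d + 1 - k₀ then (C (a' j') * X 0 + C (b' j') * X 1 + C (c' j') :
          MvPolynomial (Fin 2) F) else 1) =
        if (j' : ℕ) < d + 1 - k₀ then (a' j' * (P i j).1 + b' j' * (P i j).2 + c' j')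
        else 1 := by
      intro j'; split <;> simp
    rw [hA, hB, map_mul, map_prod, map_prod, mul_ne_zero_iff,
      Finset.prod_ne_zero_iff, Finset.prod_ne_zero_iff]
    constructor
    · rintro ⟨h1, h2⟩
      constructor
      · by_contra hcon
        push_neg at hcon
        have := h1 i (mem_univ i)
        rw [hevL i, if_pos hcon] at this
        exact this (hP i j).1
      · by_contra hcon
        push_neg at hcon
        have := h2 j (mem_univ j)
        rw [hevM j, if_pos hcon] at this
        exact this (hP i j).2
    · rintro ⟨h1, h2⟩
      refine ⟨fun i' _ => ?_, fun j' _ => ?_⟩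
      · rw [hevL i']
        by_cases h : (i' : ℕ) + 1 < k₀
        · rw [if_pos h]
          have hne : i' ≠ i := by
            intro he; rw [he] at h; omega
          intro hval
          exact hgen (Sum.inl i') (Sum.inl i) (Sum.inr j)
            (by simp [hne]) (by simp) (by simp)
            ⟨P i j, by simpa using hval, by simpa using (hP i j).1,
              by simpa using (hP i j).2⟩
        · rw [if_neg h]; exact one_ne_zero
      · rw [hevM j']
        by_cases h : (j' : ℕ) < d + 1 - k₀
        · rw [if_pos h]
          have hne : j' ≠ j := by
            intro he; rw [he] at h; omega
          intro hval
          exact hgen (Sum.inr j') (Sum.inl i) (Sum.inr j)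
            (by simp) (by simp [hne]) (by simp)
            ⟨P i j, by simpa using hval, by simpa using (hP i j).1,
              by simpa using (hP i j).2⟩
        · rw [if_neg h]; exact one_ne_zero
  have hfe : univ.filter (fun q : Fin n × Fin m =>
        eval ![(P q.1 q.2).1, (P q.1 q.2).2] (A * B) ≠ 0) =
      (univ.filter (fun i : Fin n => k₀ ≤ (i : ℕ) + 1)) ×ˢ
        (univ.filter (fun j : Fin m => d + 1 - k₀ ≤ (j : ℕ))) := by
    ext q
    simp only [mem_filter, mem_univ, true_and, Finset.mem_product, hev q.1 q.2]
  have hcn : (univ.filter (fun i : Fin n => k₀ ≤ (i : ℕ) + 1)).card = n - (k₀ - 1) := by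
    rw [Finset.filter_congr (q := fun i : Fin n => ¬((i : ℕ) < k₀ - 1)) (fun i _ => by omega),
      Finset.filter_not, Finset.card_sdiff_of_subset (Finset.filter_subset _ _), Finset.card_univ,
      Fintype.card_fin, card_fin_lt n (k₀ - 1) (by omega)]
  have hcm : (univ.filter (fun j : Fin m => d + 1 - k₀ ≤ (j : ℕ))).card =
      m - (d + 1 - k₀) := by
    rw [Finset.filter_congr (q := fun j : Fin m => ¬((j : ℕ) < d + 1 - k₀))
        (fun j _ => by omega),
      Finset.filter_not, Finset.card_sdiff_of_subset (Finset.filter_subset _ _), Finset.card_univ,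
      Fintype.card_fin, card_fin_lt m (d + 1 - k₀) (by omega)]
  rw [hfe, Finset.card_product, hcn, hcm, ← hmax, fQ]
  have h1 : k₀ - 1 ≤ n := by omega
  have h2 : d + 1 - k₀ ≤ m := by omega
  push_cast [Nat.cast_sub h1, Nat.cast_sub h2, Nat.cast_sub hk1, Nat.cast_sub hk2]
  ring
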